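/- Let Δ be a smooth Fano lattice polytope with vertices v₁, v₂, v₃ satisfying v₁ + v₂ = v₃, and assume v₃ is not contained in any primitive pair. Then for every vertex vᵢ with i ≥ 3, up to swapping v₁ and v₂, there exists m ∈ Δ° ∩ M such that ⟨m, v₁⟩ = 0, ⟨m, v₂⟩ = −1, and ⟨m, vᵢ⟩ = −1. -/
import Mathlib


/-- Let `Δ` be a smooth Fano lattice polytope with vertex set `Vert`,
and vertices `v₁, v₂, v₃` with `v₁ + v₂ = v₃`.  Lattice points of the polar `Δ°` are
encoded as integral linear functionals `m` with `⟨m,v⟩ ≥ -1` on all vertices, and a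
facet containing given vertices corresponds to such an `m` taking the value `-1` there.
Assume `v₃` is contained in no primitive pair, i.e. `v₃` lies on a common facet with
every other vertex (and lies on some facet).  Then for every vertex `vᵢ ∉ {v₁, v₂}`,
up to swapping `v₁` and `v₂`, there exists `m ∈ Δ° ∩ M` with
`⟨m,v₁⟩ = 0`, `⟨m,v₂⟩ = -1` and `⟨m,vᵢ⟩ = -1`. -/
theorem stmt3 (n : ℕ) (Vert : Finset (Fin n → ℤ)) (v₁ v₂ v₃ : Fin n → ℤ)
    (hv₁ : v₁ ∈ Vert) (hv₂ : v₂ ∈ Vert) (hv₃ : v₃ ∈ Vert)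
    (hrel : v₁ + v₂ = v₃)
    -- `v₃` lies on some facet of `Δ`
    (hfacet : ∃ m : (Fin n → ℤ) →ₗ[ℤ] ℤ, (∀ w ∈ Vert, -1 ≤ m w) ∧ m v₃ = -1)
    -- `v₃` belongs to no primitive pair: `{v₃, v}` lies on a common facet for any other
    -- vertex `v`
    (hnopair : ∀ v ∈ Vert, v ≠ v₃ →
      ∃ m : (Fin n → ℤ) →ₗ[ℤ] ℤ, (∀ w ∈ Vert, -1 ≤ m w) ∧ m v₃ = -1 ∧ m v = -1) :
    ∀ vᵢ ∈ Vert, vᵢ ≠ v₁ → vᵢ ≠ v₂ →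
      ∃ m : (Fin n → ℤ) →ₗ[ℤ] ℤ, (∀ w ∈ Vert, -1 ≤ m w) ∧
        ((m v₁ = 0 ∧ m v₂ = -1 ∧ m vᵢ = -1) ∨ (m v₂ = 0 ∧ m v₁ = -1 ∧ m vᵢ = -1)) := by
  intro vᵢ hvi h1 h2
  have key : ∀ m : (Fin n → ℤ) →ₗ[ℤ] ℤ, (∀ w ∈ Vert, -1 ≤ m w) → m v₃ = -1 → m vᵢ = -1 →
      ∃ m : (Fin n → ℤ) →ₗ[ℤ] ℤ, (∀ w ∈ Vert, -1 ≤ m w) ∧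
        ((m v₁ = 0 ∧ m v₂ = -1 ∧ m vᵢ = -1) ∨ (m v₂ = 0 ∧ m v₁ = -1 ∧ m vᵢ = -1)) := by
    intro m hm h3 hi
    have hsum : m v₁ + m v₂ = -1 := by rw [← map_add, hrel, h3]
    have g1 := hm v₁ hv₁
    have g2 := hm v₂ hv₂
    refine ⟨m, hm, ?_⟩
    have : (m v₁ = 0 ∧ m v₂ = -1) ∨ (m v₂ = 0 ∧ m v₁ = -1) := by omega
    rcases this with ⟨a, b⟩ | ⟨a, b⟩
    · exact Or.inl ⟨a, b, hi⟩
    · exact Or.inr ⟨a, b, hi⟩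
  by_cases h : vᵢ = v₃
  · obtain ⟨m, hm, h3⟩ := hfacet
    exact key m hm h3 (h ▸ h3)
  · obtain ⟨m, hm, h3, hi⟩ := hnopair vᵢ hvi h
    exact key m hm h3 hi
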